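/- Let W(E) and φ : W(E) → (ZMod 2)^n be as in the context. For t ∈ (ZMod 2)^n, 1 ≤ j ≤ d and 1 ≤ p, q ≤ d, set b^j(t) = (t_i + a_{j,i})_{i=1,…,n} and c^{p,q}(t) = (t_i + a_{p,i} + a_{q,i})_{i=1,…,n}. Then ker φ is isomorphic to the group presented by generators {y_{j,t} : 1 ≤ j ≤ d, t ∈ (ZMod 2)^n} subject to the relators: (R1) for every t ∈ (ZMod 2)^n, the word y_{1,(0,…,0)}^{t_1} · y_{2,(t_1,0,…,0)}^{t_2} ⋯ y_{n,(t_1,…,t_{n−1},0)}^{t_n}, where each exponent t_i ∈ ZMod 2 is interpreted as 0 or 1; (R2) for every 1 ≤ j ≤ d and every t ∈ (ZMod 2)^n, the word y_{j,t} · y_{j,b^j(t)}; (R3) for every t ∈ (ZMod 2)^n and every pair p, q with E p q, the word y_{p,t} · y_{q,b^p(t)} · y_{p,c^{p,q}(t)} · y_{q,b^q(t)}. -/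

import Mathlib

/-- Relators of the right-angled Coxeter group of the graph `E`:
`s j ^ 2` for every vertex `j`, and `(s i * s j) ^ 2` for every edge `{i, j}` of `E`. -/
def racgRels {d : ℕ} (E : Fin d → Fin d → Prop) : Set (FreeGroup (Fin d)) :=
  {r | (∃ j : Fin d, r = FreeGroup.of j ^ 2) ∨
    ∃ i j : Fin d, E i j ∧ r = (FreeGroup.of i * FreeGroup.of j) ^ 2}

/-- The right-angled Coxeter group `W(E)` of the graph `E`. -/
abbrev RACG {d : ℕ} (E : Fin d → Fin d → Prop) : Type := PresentedGroup (racgRels E)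

/-- The standard generator `s j` of the right-angled Coxeter group `W(E)`. -/
def racgGen {d : ℕ} (E : Fin d → Fin d → Prop) (j : Fin d) : RACG E :=
  PresentedGroup.of j

/-- The relator (R1) for `t ∈ (ℤ/2)^n`: the word
`y_{1,(0,…,0)}^{t_1} · y_{2,(t_1,0,…,0)}^{t_2} ⋯ y_{n,(t_1,…,t_{n-1},0)}^{t_n}`
in the free group on the generators `y_{j,t}`, indexed by `Fin d × ((ℤ/2)^n)`. -/
def rsWordR1 {d n : ℕ} (hnd : n ≤ d) (t : Fin n → ZMod 2) :
    FreeGroup (Fin d × (Fin n → ZMod 2)) :=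
  ((List.finRange n).map fun i =>
    FreeGroup.of
        ((Fin.castLE hnd i, fun k : Fin n => if k.val < i.val then t k else 0) :
          Fin d × (Fin n → ZMod 2)) ^
      ZMod.val (t i)).prod

/-- The relators (R1), (R2), (R3) of the Reidemeister–Schreier presentation of `ker φ`:
(R1) the words `rsWordR1 t`; (R2) the words `y_{j,t} · y_{j,b^j(t)}` with
`b^j(t) = t + a_j`; (R3) the words `y_{p,t} · y_{q,b^p(t)} · y_{p,c^{p,q}(t)} · y_{q,b^q(t)}`
with `c^{p,q}(t) = t + a_p + a_q`, whenever `E p q`. -/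
def rsRels {d n : ℕ} (hnd : n ≤ d) (E : Fin d → Fin d → Prop)
    (a : Fin d → Fin n → ZMod 2) : Set (FreeGroup (Fin d × (Fin n → ZMod 2))) :=
  {r | (∃ t : Fin n → ZMod 2, r = rsWordR1 hnd t) ∨
    (∃ (j : Fin d) (t : Fin n → ZMod 2),
      r = FreeGroup.of (j, t) * FreeGroup.of (j, fun i => t i + a j i)) ∨
    ∃ (p q : Fin d) (t : Fin n → ZMod 2), E p q ∧
      r = FreeGroup.of (p, t) * FreeGroup.of (q, fun i => t i + a p i) *
          FreeGroup.of (p, fun i => t i + a p i + a q i) *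
          FreeGroup.of (q, fun i => t i + a q i)}

namespace RSaux

lemma pi_add_self {n : ℕ} (u : Fin n → ZMod 2) : u + u = 0 :=
  funext fun _ => CharTwo.add_self_eq_zero _

lemma pi_neg_eq {n : ℕ} (u : Fin n → ZMod 2) : -u = u :=
  funext fun _ => CharTwo.neg_eq _

lemma mk_rel_eq_one {α : Type*} {rels : Set (FreeGroup α)} {r : FreeGroup α} (h : r ∈ rels) :
    PresentedGroup.mk rels r = 1 :=
  (QuotientGroup.eq_one_iff r).2 (Subgroup.subset_normalClosure h)

def shiftAut {n : ℕ} (P : Type*) [Group P] :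
    Multiplicative (Fin n → ZMod 2) →* MulAut ((Fin n → ZMod 2) → P) where
  toFun u :=
    { toFun := fun f x => f (x + u.toAdd)
      invFun := fun f x => f (x + u.toAdd)
      left_inv := fun f => funext fun x => by
        show f (x + _ + _) = f x; rw [add_assoc, pi_add_self, add_zero]
      right_inv := fun f => funext fun x => by
        show f (x + _ + _) = f x; rw [add_assoc, pi_add_self, add_zero]
      map_mul' := fun f g => rfl }
  map_one' := by ext f x; simp
  map_mul' u v := by ext f x; simp [add_assoc]

@[simp] lemma shiftAut_apply {n : ℕ} {P : Type*} [Group P]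
    (u : Multiplicative (Fin n → ZMod 2)) (f : (Fin n → ZMod 2) → P) (x : Fin n → ZMod 2) :
    shiftAut P u f x = f (x + u.toAdd) := rfl

lemma take_map_prod_succ {n : ℕ} {G : Type*} [Monoid G] (f : Fin n → G) (m : ℕ) (hm : m < n) :
    (((List.finRange n).take (m+1)).map f).prod
      = (((List.finRange n).take m).map f).prod * f ⟨m, hm⟩ := by
  rw [List.map_take, List.map_take, List.prod_take_succ _ m (by simpa using hm)]
  congr 1
  simp

lemma take_map_length {n : ℕ} {G : Type*} [Monoid G] (f : Fin n → G) :
    (((List.finRange n).take n).map f).prod = ((List.finRange n).map f).prod := by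
  rw [List.take_of_length_le (by simp)]

section Main

variable {d n : ℕ} (hnd : n ≤ d) (E : Fin d → Fin d → Prop) (a : Fin d → Fin n → ZMod 2)

/-- generator of the presented group `P` -/
def yP (j : Fin d) (t : Fin n → ZMod 2) : PresentedGroup (rsRels hnd E a) :=
  PresentedGroup.of (j, t)

lemma relR1 (t : Fin n → ZMod 2) :
    PresentedGroup.mk (rsRels hnd E a) (rsWordR1 hnd t) = 1 :=
  mk_rel_eq_one (Or.inl ⟨t, rfl⟩)

lemma relR2 (j : Fin d) (t : Fin n → ZMod 2) :
    yP hnd E a j t * yP hnd E a j (t + a j) = 1 := by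
  have h := mk_rel_eq_one (rels := rsRels hnd E a)
    (Or.inr (Or.inl ⟨j, t, rfl⟩))
  rw [map_mul] at h
  exact h

lemma relR3 {p q : Fin d} (hpq : E p q) (t : Fin n → ZMod 2) :
    yP hnd E a p t * yP hnd E a q (t + a p) * yP hnd E a p (t + a p + a q) *
      yP hnd E a q (t + a q) = 1 := by
  have h := mk_rel_eq_one (rels := rsRels hnd E a)
    (Or.inr (Or.inr ⟨p, q, t, hpq, rfl⟩))
  rw [map_mul, map_mul, map_mul] at h
  exact h

lemma racg_sq (j : Fin d) : racgGen E j * racgGen E j = 1 := by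
  have h := mk_rel_eq_one (rels := racgRels E) (Or.inl ⟨j, rfl⟩)
  rw [map_pow, sq] at h
  exact h

lemma racg_edge {p q : Fin d} (hpq : E p q) :
    racgGen E p * racgGen E q * racgGen E p * racgGen E q = 1 := by
  have h := mk_rel_eq_one (rels := racgRels E) (Or.inr ⟨p, q, hpq, rfl⟩)
  rw [map_pow, map_mul, sq] at h
  rw [← mul_assoc] at h
  exact h


/-- the wreath-type target group -/
abbrev GW (hnd : n ≤ d) (E : Fin d → Fin d → Prop) (a : Fin d → Fin n → ZMod 2) : Type _ :=
  SemidirectProduct ((Fin n → ZMod 2) → PresentedGroup (rsRels hnd E a))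
    (Multiplicative (Fin n → ZMod 2)) (shiftAut _)

/-- generator image for `Ψ` -/
def psiGen (j : Fin d) : GW hnd E a :=
  ⟨fun x => yP hnd E a j x, Multiplicative.ofAdd (a j)⟩

lemma zmod2_cases (z : ZMod 2) : z = 0 ∨ z = 1 := by
  revert z; decide

lemma psi_rels : ∀ r ∈ racgRels E, FreeGroup.lift (psiGen hnd E a) r = 1 := by
  rintro r (⟨j, rfl⟩ | ⟨p, q, hpq, rfl⟩) <;>
    simp only [map_pow, map_mul, FreeGroup.lift_apply_of, sq]
  · ext
    · simp only [SemidirectProduct.mul_left, Pi.mul_apply, shiftAut_apply,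
        SemidirectProduct.one_left, Pi.one_apply, psiGen, toAdd_ofAdd]
      exact relR2 hnd E a j _
    · simp only [SemidirectProduct.mul_right, SemidirectProduct.one_right, psiGen]
      rw [← ofAdd_add, pi_add_self, ofAdd_zero]
  · ext
    · simp only [SemidirectProduct.mul_left, SemidirectProduct.mul_right, Pi.mul_apply,
        shiftAut_apply, SemidirectProduct.one_left, Pi.one_apply, toAdd_mul, toAdd_ofAdd,
        psiGen]
      rename_i x
      have h1 : x + (a p + a q) = x + a p + a q := by rw [add_assoc]
      have h2 : x + (a p + a q) + a p = x + a q := by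
        funext i
        exact (by decide : ∀ u v w : ZMod 2, u + (v + w) + v = u + w) (x i) (a p i) (a q i)
      rw [h2, h1, ← mul_assoc]
      exact relR3 hnd E a hpq x
    · simp only [SemidirectProduct.mul_right, SemidirectProduct.one_right, psiGen]
      rw [← ofAdd_add, ← ofAdd_add, pi_add_self, ofAdd_zero]

/-- the homomorphism `Ψ : W(E) → P^(Q) ⋊ Q` -/
def psi : RACG E →* GW hnd E a :=
  PresentedGroup.toGroup (psi_rels hnd E a)

@[simp] lemma psi_of (j : Fin d) : psi hnd E a (racgGen E j) = psiGen hnd E a j :=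
  PresentedGroup.toGroup.of _

/-- the Schreier transversal element `ρ(t) = s₁^{t₁} ⋯ s_n^{t_n}` -/
def rho (t : Fin n → ZMod 2) : RACG E :=
  ((List.finRange n).map fun i => racgGen E (Fin.castLE hnd i) ^ (t i).val).prod

def rhoPre (t : Fin n → ZMod 2) (m : ℕ) : RACG E :=
  (((List.finRange n).take m).map fun i => racgGen E (Fin.castLE hnd i) ^ (t i).val).prod

lemma rhoPre_last (t : Fin n → ZMod 2) : rhoPre hnd E t n = rho hnd E t :=
  take_map_length _

/-- truncation of `t` below `m` -/
def tcut (t : Fin n → ZMod 2) (m : ℕ) : Fin n → ZMod 2 :=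
  fun k => if k.val < m then t k else 0

lemma tcut_zero (t : Fin n → ZMod 2) : tcut t 0 = 0 := by
  funext k; simp [tcut]

lemma tcut_last (t : Fin n → ZMod 2) : tcut t n = t := by
  funext k; simp [tcut, k.isLt]

lemma tcut_succ_zero {t : Fin n → ZMod 2} {m : ℕ} (hm : m < n) (h : t ⟨m, hm⟩ = 0) :
    tcut t (m + 1) = tcut t m := by
  funext k
  simp only [tcut]
  rcases lt_trichotomy k.val m with hk | hk | hk
  · rw [if_pos hk, if_pos (by omega)]
  · have hkm : k = ⟨m, hm⟩ := Fin.ext hk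
    rw [if_pos (by omega), if_neg (by omega), hkm, h]
  · rw [if_neg (by omega), if_neg (by omega)]

lemma tcut_succ_one {t : Fin n → ZMod 2} {m : ℕ} (hm : m < n) (h : t ⟨m, hm⟩ = 1) :
    tcut t m + Pi.single (⟨m, hm⟩ : Fin n) 1 = tcut t (m + 1) := by
  funext k
  simp only [tcut, Pi.add_apply]
  rcases lt_trichotomy k.val m with hk | hk | hk
  · rw [if_pos hk, if_pos (by omega),
      Pi.single_eq_of_ne (Fin.ne_of_val_ne (show k.val ≠ m by omega)), add_zero]
  · have hkm : k = ⟨m, hm⟩ := Fin.ext hk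
    subst hkm
    rw [if_neg (by omega), if_pos (by omega), Pi.single_eq_same, h, zero_add]
  · rw [if_neg (by omega), if_neg (by omega),
      Pi.single_eq_of_ne (Fin.ne_of_val_ne (show k.val ≠ m by omega)), add_zero]

lemma rho_zero : rho hnd E (0 : Fin n → ZMod 2) = 1 := by
  apply List.prod_eq_one
  intro x hx
  simp only [List.mem_map] at hx
  obtain ⟨i, -, rfl⟩ := hx
  show racgGen E _ ^ (0 : ZMod 2).val = 1
  rw [ZMod.val_zero, pow_zero]

/-- generator image for `θ₀` -/
def thGen (x : Fin d × (Fin n → ZMod 2)) : RACG E :=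
  rho hnd E x.2 * racgGen E x.1 * (rho hnd E (x.2 + a x.1))⁻¹

def wordPre (t : Fin n → ZMod 2) (m : ℕ) : FreeGroup (Fin d × (Fin n → ZMod 2)) :=
  (((List.finRange n).take m).map fun i =>
    FreeGroup.of
        ((Fin.castLE hnd i, fun k : Fin n => if k.val < i.val then t k else 0) :
          Fin d × (Fin n → ZMod 2)) ^ ZMod.val (t i)).prod

lemma wordPre_last (t : Fin n → ZMod 2) : wordPre hnd t n = rsWordR1 hnd t := by
  unfold wordPre rsWordR1
  rw [List.take_of_length_le (by simp)]

lemma wordPre_succ (t : Fin n → ZMod 2) (m : ℕ) (hm : m < n) :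
    wordPre hnd t (m + 1) = wordPre hnd t m *
      FreeGroup.of ((Fin.castLE hnd ⟨m, hm⟩, tcut t m) : Fin d × (Fin n → ZMod 2)) ^
        (t ⟨m, hm⟩).val :=
  take_map_prod_succ _ m hm

lemma rhoPre_succ (t : Fin n → ZMod 2) (m : ℕ) (hm : m < n) :
    rhoPre hnd E t (m + 1) = rhoPre hnd E t m *
      racgGen E (Fin.castLE hnd ⟨m, hm⟩) ^ (t ⟨m, hm⟩).val :=
  take_map_prod_succ _ m hm

variable (ha : ∀ (i : Fin d) (h : i.val < n), a i = Pi.single (⟨i.val, h⟩ : Fin n) 1)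

include ha in
lemma lift_wordPre (t : Fin n → ZMod 2) : ∀ m, m ≤ n →
    FreeGroup.lift (thGen hnd E a) (wordPre hnd t m) * rho hnd E (tcut t m)
      = rhoPre hnd E t m := by
  intro m
  induction m with
  | zero =>
    intro _
    rw [tcut_zero, rho_zero]
    simp [wordPre, rhoPre]
  | succ m ih =>
    intro hm1
    have hm : m < n := hm1
    have haa : a (Fin.castLE hnd ⟨m, hm⟩) = Pi.single (⟨m, hm⟩ : Fin n) 1 := ha _ hm
    rw [wordPre_succ hnd t m hm, rhoPre_succ hnd E t m hm, map_mul, map_pow,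
      FreeGroup.lift_apply_of]
    rcases zmod2_cases (t ⟨m, hm⟩) with h | h
    · rw [h, ZMod.val_zero, pow_zero, mul_one, pow_zero, mul_one,
        tcut_succ_zero hm h]
      exact ih (by omega)
    · have hval : ((1 : ZMod 2)).val = 1 := rfl
      rw [h, hval, pow_one, pow_one]
      have hth : thGen hnd E a (Fin.castLE hnd ⟨m, hm⟩, tcut t m)
          = rho hnd E (tcut t m) * racgGen E (Fin.castLE hnd ⟨m, hm⟩) *
            (rho hnd E (tcut t (m + 1)))⁻¹ := by
        unfold thGen
        rw [haa, tcut_succ_one hm h]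
      rw [hth, ← ih (by omega)]
      group

include ha in
lemma psi_rhoPre (t : Fin n → ZMod 2) : ∀ m, m ≤ n →
    (psi hnd E a (rhoPre hnd E t m)).left 0
        = PresentedGroup.mk (rsRels hnd E a) (wordPre hnd t m) ∧
      (psi hnd E a (rhoPre hnd E t m)).right = Multiplicative.ofAdd (tcut t m) := by
  intro m
  induction m with
  | zero =>
    intro _
    have h1 : rhoPre hnd E t 0 = 1 := rfl
    have h2 : wordPre hnd t 0 = 1 := rfl
    rw [h1, h2, map_one, map_one, tcut_zero, ofAdd_zero]
    exact ⟨rfl, rfl⟩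
  | succ m ih =>
    intro hm1
    have hm : m < n := hm1
    obtain ⟨ih1, ih2⟩ := ih (by omega)
    have haa : a (Fin.castLE hnd ⟨m, hm⟩) = Pi.single (⟨m, hm⟩ : Fin n) 1 := ha _ hm
    rw [rhoPre_succ hnd E t m hm, wordPre_succ hnd t m hm, map_mul, map_mul, map_pow,
      map_pow, psi_of]
    rcases zmod2_cases (t ⟨m, hm⟩) with h | h
    · rw [h, ZMod.val_zero, pow_zero, pow_zero, mul_one, mul_one, tcut_succ_zero hm h]
      exact ⟨ih1, ih2⟩
    · have hval : ((1 : ZMod 2)).val = 1 := rfl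
      rw [h, hval, pow_one, pow_one]
      constructor
      · simp only [SemidirectProduct.mul_left, Pi.mul_apply, shiftAut_apply, ih2, toAdd_ofAdd,
          zero_add, ih1]
        rfl
      · simp only [SemidirectProduct.mul_right, ih2, psiGen, haa]
        rw [← ofAdd_add, tcut_succ_one hm h]

include ha in
lemma psi_rho_left (t : Fin n → ZMod 2) : (psi hnd E a (rho hnd E t)).left 0 = 1 := by
  have h := (psi_rhoPre hnd E a ha t n le_rfl).1
  rw [rhoPre_last, wordPre_last] at h
  rw [h, relR1]

include ha in
lemma psi_rho_right (t : Fin n → ZMod 2) :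
    (psi hnd E a (rho hnd E t)).right = Multiplicative.ofAdd t := by
  have h := (psi_rhoPre hnd E a ha t n le_rfl).2
  rw [rhoPre_last, tcut_last] at h
  exact h

include ha in
lemma th_rels : ∀ r ∈ rsRels hnd E a, FreeGroup.lift (thGen hnd E a) r = 1 := by
  rintro r (⟨t, rfl⟩ | ⟨j, t, rfl⟩ | ⟨p, q, t, hpq, rfl⟩)
  · have h := lift_wordPre hnd E a ha t n le_rfl
    rw [wordPre_last, tcut_last, rhoPre_last] at h
    exact mul_right_cancel (h.trans (one_mul _).symm)
  · simp only [map_mul, FreeGroup.lift_apply_of]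
    have e1 : (fun i => t i + a j i) = t + a j := rfl
    have e2 : t + a j + a j = t := by rw [add_assoc, pi_add_self, add_zero]
    show thGen hnd E a (j, t) * thGen hnd E a (j, fun i => t i + a j i) = 1
    unfold thGen
    simp only [e1, e2]
    calc rho hnd E t * racgGen E j * (rho hnd E (t + a j))⁻¹ *
          (rho hnd E (t + a j) * racgGen E j * (rho hnd E t)⁻¹)
        = rho hnd E t * (racgGen E j * racgGen E j) * (rho hnd E t)⁻¹ := by group
      _ = 1 := by rw [racg_sq]; group
  · simp only [map_mul, FreeGroup.lift_apply_of]
    show thGen hnd E a (p, t) * thGen hnd E a (q, fun i => t i + a p i) *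
        thGen hnd E a (p, fun i => t i + a p i + a q i) *
        thGen hnd E a (q, fun i => t i + a q i) = 1
    have e1 : (fun i => t i + a p i) = t + a p := rfl
    have e2 : (fun i => t i + a p i + a q i) = t + a p + a q := rfl
    have e3 : (fun i => t i + a q i) = t + a q := rfl
    have e4 : t + a p + a q + a p = t + a q := by
      funext i
      exact (by decide : ∀ u v w : ZMod 2, u + v + w + v = u + w) (t i) (a p i) (a q i)
    have e5 : t + a q + a q = t := by rw [add_assoc, pi_add_self, add_zero]
    unfold thGen
    simp only [e1, e2, e3, e4, e5]
    calc rho hnd E t * racgGen E p * (rho hnd E (t + a p))⁻¹ *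
          (rho hnd E (t + a p) * racgGen E q * (rho hnd E (t + a p + a q))⁻¹) *
          (rho hnd E (t + a p + a q) * racgGen E p * (rho hnd E (t + a q))⁻¹) *
          (rho hnd E (t + a q) * racgGen E q * (rho hnd E t)⁻¹)
        = rho hnd E t * (racgGen E p * racgGen E q * racgGen E p * racgGen E q) *
            (rho hnd E t)⁻¹ := by group
      _ = 1 := by rw [racg_edge E hpq]; group

/-- the homomorphism `θ₀ : P → W(E)` -/
def theta0 : PresentedGroup (rsRels hnd E a) →* RACG E :=
  PresentedGroup.toGroup (th_rels hnd E a ha)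

@[simp] lemma theta0_of (j : Fin d) (t : Fin n → ZMod 2) :
    theta0 hnd E a ha (yP hnd E a j t) = thGen hnd E a (j, t) :=
  PresentedGroup.toGroup.of _

/-- `Ψ₂ : W → W^(Q) ⋊ Q`, `w ↦ (x ↦ ρ(x) w ρ(x·φ(w))⁻¹, φ(w))`. -/
def psiW : RACG E →*
    SemidirectProduct ((Fin n → ZMod 2) → RACG E) (Multiplicative (Fin n → ZMod 2))
      (shiftAut _) where
  toFun w := ⟨fun x => rho hnd E x * w *
      (rho hnd E (x + Multiplicative.toAdd ((psi hnd E a w).right)))⁻¹,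
    (psi hnd E a w).right⟩
  map_one' := by
    ext
    · simp only [map_one, SemidirectProduct.one_right, toAdd_one, add_zero, mul_one,
        mul_inv_cancel, SemidirectProduct.one_left, Pi.one_apply]
    · simp only [map_one, SemidirectProduct.one_right]
  map_mul' w v := by
    ext
    · rename_i x
      simp only [map_mul, SemidirectProduct.mul_left, SemidirectProduct.mul_right,
        Pi.mul_apply, shiftAut_apply, toAdd_mul]
      rw [← add_assoc]
      group
    · simp only [map_mul, SemidirectProduct.mul_right]

/-- the comparison map `W^(Q) ⋊ Q → ... ` transported along `θ₀` -/
def mapTheta : SemidirectProduct ((Fin n → ZMod 2) → PresentedGroup (rsRels hnd E a))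
      (Multiplicative (Fin n → ZMod 2)) (shiftAut _) →*
    SemidirectProduct ((Fin n → ZMod 2) → RACG E) (Multiplicative (Fin n → ZMod 2))
      (shiftAut _) :=
  SemidirectProduct.map ((theta0 hnd E a ha).compLeft (Fin n → ZMod 2)) (MonoidHom.id _)
    (fun _ => MonoidHom.ext fun _ => rfl)

include ha in
lemma psi_theta_eq :
    (mapTheta hnd E a ha).comp (psi hnd E a) = psiW hnd E a := by
  apply PresentedGroup.ext
  intro j
  rw [MonoidHom.comp_apply]
  have h1 : psi hnd E a (PresentedGroup.of j) = psiGen hnd E a j := psi_of hnd E a j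
  rw [h1]
  ext
  · rename_i x
    show theta0 hnd E a ha (yP hnd E a j x) = _
    rw [theta0_of]
    show thGen hnd E a (j, x) = rho hnd E x * racgGen E j *
      (rho hnd E (x + Multiplicative.toAdd ((psi hnd E a (PresentedGroup.of j)).right)))⁻¹
    rw [h1]
    rfl
  · show Multiplicative.toAdd (Multiplicative.ofAdd (a j)) _ =
      Multiplicative.toAdd (psi hnd E a (PresentedGroup.of j)).right _
    rw [h1]
    rfl

end Main

end RSaux

/-- Proposition 3.1: `ker φ` is isomorphic to the group presented by the generators
`y_{j,t}` (`1 ≤ j ≤ d`, `t ∈ (ℤ/2)^n`) subject to the relators (R1), (R2), (R3). -/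
theorem stmt_3 {d : ℕ} (hd : 1 ≤ d) (E : Fin d → Fin d → Prop)
    (hsymm : ∀ i j, E i j → E j i) (hirr : ∀ i, ¬ E i i)
    (n : ℕ) (hn : 1 ≤ n) (hnd : n ≤ d)
    (a : Fin d → Fin n → ZMod 2)
    (ha : ∀ (i : Fin d) (h : i.val < n), a i = Pi.single (⟨i.val, h⟩ : Fin n) 1)
    (φ : RACG E →* Multiplicative (Fin n → ZMod 2))
    (hφ : ∀ j : Fin d, φ (racgGen E j) = Multiplicative.ofAdd (a j)) :
    Nonempty (PresentedGroup (rsRels hnd E a) ≃* ↥φ.ker) := by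
  classical
  have hφ' : φ = SemidirectProduct.rightHom.comp (RSaux.psi hnd E a) := by
    apply PresentedGroup.ext
    intro j
    rw [MonoidHom.comp_apply,
      show (PresentedGroup.of j : RACG E) = racgGen E j from rfl, hφ, RSaux.psi_of]
    rfl
  subst hφ'
  set φ := SemidirectProduct.rightHom.comp (RSaux.psi hnd E a) with hφdef
  have hrho : ∀ u, φ (RSaux.rho hnd E u) = Multiplicative.ofAdd u := by
    intro u
    show SemidirectProduct.rightHom (RSaux.psi hnd E a (RSaux.rho hnd E u)) = _
    exact RSaux.psi_rho_right hnd E a ha u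
  have hgen : ∀ j : Fin d, φ (racgGen E j) = Multiplicative.ofAdd (a j) := by
    intro j
    show SemidirectProduct.rightHom (RSaux.psi hnd E a (racgGen E j)) = _
    rw [RSaux.psi_of]
    rfl
  -- θ₀ lands in ker φ
  have hker : ∀ x : PresentedGroup (rsRels hnd E a), RSaux.theta0 hnd E a ha x ∈ φ.ker := by
    have hcomp : φ.comp (RSaux.theta0 hnd E a ha) = 1 := by
      apply PresentedGroup.ext
      rintro ⟨j, t⟩
      rw [MonoidHom.comp_apply,
        show (PresentedGroup.of (j, t) : PresentedGroup (rsRels hnd E a))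
          = RSaux.yP hnd E a j t from rfl,
        RSaux.theta0_of]
      unfold RSaux.thGen
      rw [map_mul, map_mul, map_inv, hrho, hrho, hgen, ← ofAdd_add, mul_inv_cancel]
      rfl
    intro x
    rw [MonoidHom.mem_ker]
    exact DFunLike.congr_fun hcomp x
  let θ' : PresentedGroup (rsRels hnd E a) →* ↥φ.ker :=
    (RSaux.theta0 hnd E a ha).codRestrict _ hker
  have hright1 : ∀ w : ↥φ.ker, (RSaux.psi hnd E a w.1).right = 1 := by
    intro w
    exact MonoidHom.mem_ker.1 w.2
  let Θ : ↥φ.ker →* PresentedGroup (rsRels hnd E a) :=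
    MonoidHom.mk' (fun w => (RSaux.psi hnd E a w.1).left 0) (by
      intro w v
      show (RSaux.psi hnd E a (w.1 * v.1)).left 0 = _
      rw [map_mul]
      simp only [SemidirectProduct.mul_left, Pi.mul_apply, RSaux.shiftAut_apply,
        hright1 w, toAdd_one, add_zero])
  have hΘθ : ∀ x, Θ (θ' x) = x := by
    have hcomp : Θ.comp θ' = MonoidHom.id _ := by
      apply PresentedGroup.ext
      rintro ⟨j, t⟩
      show (RSaux.psi hnd E a (RSaux.theta0 hnd E a ha (RSaux.yP hnd E a j t))).left 0 = _
      rw [RSaux.theta0_of]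
      unfold RSaux.thGen
      rw [map_mul, map_mul, map_inv, RSaux.psi_of]
      have hA1 := RSaux.psi_rho_left hnd E a ha t
      have hA2 := RSaux.psi_rho_right hnd E a ha t
      have hC1 := RSaux.psi_rho_left hnd E a ha (t + a j)
      have hC2 := RSaux.psi_rho_right hnd E a ha (t + a j)
      simp only [SemidirectProduct.mul_left, SemidirectProduct.mul_right,
        SemidirectProduct.inv_left, SemidirectProduct.inv_right, Pi.mul_apply, Pi.inv_apply,
        RSaux.shiftAut_apply, hA1, hA2, hC2, one_mul, toAdd_mul, toAdd_ofAdd, toAdd_inv,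
        zero_add]
      rw [show Multiplicative.toAdd (RSaux.psiGen hnd E a j).right = a j from rfl,
        add_neg_cancel, hC1, inv_one, mul_one]
      rfl
    intro x
    exact DFunLike.congr_fun hcomp x
  have hinj : Function.Injective θ' := by
    intro x y hxy
    rw [← hΘθ x, ← hΘθ y, hxy]
  have hsurj : Function.Surjective θ' := by
    intro w
    refine ⟨Θ w, ?_⟩
    apply Subtype.ext
    show RSaux.theta0 hnd E a ha ((RSaux.psi hnd E a w.1).left 0) = w.1
    have h := DFunLike.congr_fun (RSaux.psi_theta_eq hnd E a ha) w.1
    have hleft := congrFun (congrArg SemidirectProduct.left h) 0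
    have hL : (RSaux.mapTheta hnd E a ha ((RSaux.psi hnd E a) w.1)).left 0
        = RSaux.theta0 hnd E a ha ((RSaux.psi hnd E a w.1).left 0) := rfl
    rw [MonoidHom.comp_apply] at hleft
    rw [← hL, hleft]
    show RSaux.rho hnd E 0 * w.1 *
      (RSaux.rho hnd E (0 + Multiplicative.toAdd ((RSaux.psi hnd E a w.1).right)))⁻¹ = w.1
    rw [hright1 w, toAdd_one, add_zero, RSaux.rho_zero, one_mul, inv_one, mul_one]
  exact ⟨MulEquiv.ofBijective θ' ⟨hinj, hsurj⟩⟩
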